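/- Let 0 < a < b and K > 0 be real numbers and let f be a differentiable real-valued function on [a, b] with f(s) > 0 for all s ∈ [a, b] and f'(s) ≥ K·s^{−1/3}·f(s)^{4/3} for all s ∈ [a, b]. Then f(a) ≤ 8·K^{−3}·(b^{2/3} − a^{2/3})^{−3}. -/

import Mathlib

/-- A positive differentiable `f` on `[a,b]` with
`f' ≥ K·s^{−1/3}·f^{4/3}` satisfies `f(a) ≤ 8·K^{−3}·(b^{2/3} − a^{2/3})^{−3}`. -/
theorem stmt_6 (a b K : ℝ) (ha : 0 < a) (hab : a < b) (hK : 0 < K) (f f' : ℝ → ℝ)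
    (hderiv : ∀ s ∈ Set.Icc a b, HasDerivWithinAt f (f' s) (Set.Icc a b) s)
    (hpos : ∀ s ∈ Set.Icc a b, 0 < f s)
    (hineq : ∀ s ∈ Set.Icc a b, K * s ^ (-(1 : ℝ) / 3) * f s ^ ((4 : ℝ) / 3) ≤ f' s) :
    f a ≤ 8 * K ^ (-(3 : ℝ)) * (b ^ ((2 : ℝ) / 3) - a ^ ((2 : ℝ) / 3)) ^ (-(3 : ℝ)) := by
  set g : ℝ → ℝ := fun s => -3 * f s ^ (-(1 : ℝ) / 3) + -(3 * K / 2) * s ^ ((2 : ℝ) / 3) with hg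
  have hint : interior (Set.Icc a b) = Set.Ioo a b := interior_Icc
  -- derivative of g on the interior
  have hgd : ∀ s ∈ interior (Set.Icc a b),
      HasDerivWithinAt g (f' s * f s ^ (-(4 : ℝ) / 3) - K * s ^ (-(1 : ℝ) / 3))
        (interior (Set.Icc a b)) s := by
    intro s hs
    rw [hint] at hs ⊢
    have hsI : s ∈ Set.Icc a b := Set.Ioo_subset_Icc_self hs
    have hfs : 0 < f s := hpos s hsI
    have hs0 : 0 < s := lt_trans ha hs.1
    have h1 : HasDerivWithinAt (fun y => f y ^ (-(1 : ℝ) / 3))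
        (f' s * (-(1 : ℝ) / 3) * f s ^ (-(1 : ℝ) / 3 - 1)) (Set.Ioo a b) s :=
      ((hderiv s hsI).mono Set.Ioo_subset_Icc_self).rpow_const (Or.inl hfs.ne')
    have h2 : HasDerivWithinAt (fun y : ℝ => y ^ ((2 : ℝ) / 3))
        (((2 : ℝ) / 3) * s ^ ((2 : ℝ) / 3 - 1)) (Set.Ioo a b) s :=
      (Real.hasDerivAt_rpow_const (Or.inl hs0.ne')).hasDerivWithinAt
    have := (h1.const_mul (-3 : ℝ)).add (h2.const_mul (-(3 * K / 2) : ℝ))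
    convert this using 1
    case e'_4 => rfl
    case e'_5 => rfl
    case e'_8 => rfl
    have e1 : (-(1 : ℝ) / 3 - 1) = -(4 : ℝ) / 3 := by norm_num
    have e2 : ((2 : ℝ) / 3 - 1) = -(1 : ℝ) / 3 := by norm_num
    rw [e1, e2]; ring
  -- g is monotone on [a,b]
  have hmono : MonotoneOn g (Set.Icc a b) := by
    apply monotoneOn_of_hasDerivWithinAt_nonneg (convex_Icc a b)
    · have hfc : ContinuousOn f (Set.Icc a b) := fun x hx =>
        (hderiv x hx).continuousWithinAt
      apply ContinuousOn.add
      · exact continuousOn_const.mul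
          (hfc.rpow_const fun x hx => Or.inl (hpos x hx).ne')
      · exact continuousOn_const.mul
          (continuousOn_id.rpow_const fun x hx => Or.inl (ne_of_gt (lt_of_lt_of_le ha hx.1)))
    · exact hgd
    · intro s hs
      rw [hint] at hs
      have hsI : s ∈ Set.Icc a b := Set.Ioo_subset_Icc_self hs
      have hfs : 0 < f s := hpos s hsI
      have hs0 : 0 < s := lt_trans ha hs.1
      have key : K * s ^ (-(1 : ℝ) / 3) * f s ^ ((4 : ℝ) / 3) ≤ f' s := hineq s hsI
      have hfp : (0 : ℝ) < f s ^ (-(4 : ℝ) / 3) := Real.rpow_pos_of_pos hfs _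
      have : K * s ^ (-(1 : ℝ) / 3) * f s ^ ((4 : ℝ) / 3) * f s ^ (-(4 : ℝ) / 3)
          ≤ f' s * f s ^ (-(4 : ℝ) / 3) := by
        exact mul_le_mul_of_nonneg_right key hfp.le
      have hcancel : f s ^ ((4 : ℝ) / 3) * f s ^ (-(4 : ℝ) / 3) = 1 := by
        rw [← Real.rpow_add hfs]; norm_num
      have h2 : K * s ^ (-(1 : ℝ) / 3) ≤ f' s * f s ^ (-(4 : ℝ) / 3) := by
        calc K * s ^ (-(1 : ℝ) / 3)
            = K * s ^ (-(1 : ℝ) / 3) * (f s ^ ((4 : ℝ) / 3) * f s ^ (-(4 : ℝ) / 3)) := by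
              rw [hcancel]; ring
          _ = K * s ^ (-(1 : ℝ) / 3) * f s ^ ((4 : ℝ) / 3) * f s ^ (-(4 : ℝ) / 3) := by ring
          _ ≤ _ := this
      linarith
  -- use monotonicity between a and b
  have haI : a ∈ Set.Icc a b := ⟨le_refl a, hab.le⟩
  have hbI : b ∈ Set.Icc a b := ⟨hab.le, le_refl b⟩
  have hga : g a ≤ g b := hmono haI hbI hab.le
  set D : ℝ := b ^ ((2 : ℝ) / 3) - a ^ ((2 : ℝ) / 3) with hD
  have hDpos : 0 < D := by
    have : a ^ ((2 : ℝ) / 3) < b ^ ((2 : ℝ) / 3) :=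
      Real.rpow_lt_rpow ha.le hab (by norm_num)
    simpa [hD, sub_pos] using this
  have hfa : 0 < f a := hpos a haI
  have hfb : 0 < f b ^ (-(1 : ℝ) / 3) := Real.rpow_pos_of_pos (hpos b hbI) _
  have hc : K / 2 * D ≤ f a ^ (-(1 : ℝ) / 3) := by
    simp only [hg] at hga
    rw [hD]
    linarith
  have hcpos : 0 < K / 2 * D := by positivity
  have hrw : f a = (f a ^ (-(1 : ℝ) / 3)) ^ (-(3 : ℝ)) := by
    rw [← Real.rpow_mul hfa.le]; norm_num
  have hle : f a ≤ (K / 2 * D) ^ (-(3 : ℝ)) := by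
    rw [hrw]
    exact Real.rpow_le_rpow_of_nonpos hcpos hc (by norm_num)
  have hcube : ∀ x : ℝ, 0 < x → x ^ (-(3 : ℝ)) = (x ^ (3 : ℕ))⁻¹ := by
    intro x hx
    rw [Real.rpow_neg hx.le, show ((3 : ℝ)) = ((3 : ℕ) : ℝ) by norm_num, Real.rpow_natCast]
  calc f a ≤ (K / 2 * D) ^ (-(3 : ℝ)) := hle
    _ = 8 * K ^ (-(3 : ℝ)) * D ^ (-(3 : ℝ)) := by
        rw [hcube _ hcpos, hcube _ hK, hcube _ hDpos]
        field_simp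
        ring
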